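/- Let n jobs have processing times a_i, b_i ∈ ℕ with 1 ≤ a_i ≤ b_i and a_1 ≤ … ≤ a_n, and let p be the rightmost pivot of the full sequence. If p < n (i.e., some job lies to the right of the pivot), then the rightmost pivot of the sequence obtained by removing job J_p is an index strictly greater than p. -/
import Mathlib


/-- The value of the critical path through job `k` when the jobs of `S` are
scheduled in SPT (increasing-index) order:
`∑_{i ∈ S, i ≤ k} a i + ∑_{j ∈ S, j ≥ k} b j`. -/
def jobVal {n : ℕ} (a b : Fin n → ℕ) (S : Finset (Fin n)) (k : Fin n) : ℕ :=
  ∑ i ∈ S.filter (fun i => i ≤ k), a i + ∑ j ∈ S.filter (fun j => k ≤ j), b j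

/-- The makespan of the subset `S` of jobs scheduled in SPT (increasing-index)
order: `C(S) = max_{k ∈ S} (∑_{i ∈ S, i ≤ k} a i + ∑_{j ∈ S, j ≥ k} b j)`,
with `C(∅) = 0`. -/
def makespanOf {n : ℕ} (a b : Fin n → ℕ) (S : Finset (Fin n)) : ℕ :=
  S.sup (jobVal a b S)

/-- Let `p` be the rightmost pivot of the full sequence.  If
some job lies to the right of the pivot, then the rightmost pivot `q` of the
sequence obtained by removing job `p` satisfies `p < q`. -/
theorem pivot_moves_right_after_removal (n : ℕ) (a b : Fin n → ℕ)
    (ha1 : ∀ i, 1 ≤ a i) (hab : ∀ i, a i ≤ b i) (hmono : Monotone a)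
    (p : Fin n)
    (hp : jobVal a b Finset.univ p = makespanOf a b Finset.univ)
    (hpmax : ∀ k : Fin n,
      jobVal a b Finset.univ k = makespanOf a b Finset.univ → k ≤ p)
    (hright : ∃ j : Fin n, p < j)
    (q : Fin n) (hq : q ∈ Finset.univ.erase p)
    (hqv : jobVal a b (Finset.univ.erase p) q = makespanOf a b (Finset.univ.erase p))
    (hqmax : ∀ k ∈ Finset.univ.erase p,
      jobVal a b (Finset.univ.erase p) k = makespanOf a b (Finset.univ.erase p) → k ≤ q) :
    p < q := by
  by_contra hlt
  push_neg at hlt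
  have hqne : q ≠ p := Finset.ne_of_mem_erase hq
  have hqp : q < p := lt_of_le_of_ne hlt hqne
  obtain ⟨j', hj'⟩ := hright
  have hjn : p.val + 1 < n := lt_of_le_of_lt (Nat.succ_le_of_lt hj') j'.isLt
  set j : Fin n := ⟨p.val + 1, hjn⟩ with hjdef
  have hjval : (j : ℕ) = p.val + 1 := rfl
  have hpj : p < j := by rw [Fin.lt_def, hjval]; omega
  have hjE : j ∈ Finset.univ.erase p :=
    Finset.mem_erase.2 ⟨Fin.ne_of_gt hpj, Finset.mem_univ _⟩
  set E := Finset.univ.erase p with hE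
  have hmem : ∀ (f : Fin n → ℕ) (P : Fin n → Prop) [DecidablePred P], P p →
      ∑ i ∈ E.filter (fun i => P i), f i + f p = ∑ i ∈ Finset.univ.filter (fun i => P i), f i := by
    intro f P _ hPp
    rw [hE, Finset.filter_erase]
    exact Finset.sum_erase_add _ _ (Finset.mem_filter.2 ⟨Finset.mem_univ _, hPp⟩)
  have hnmem : ∀ (f : Fin n → ℕ) (P : Fin n → Prop) [DecidablePred P], ¬ P p →
      ∑ i ∈ E.filter (fun i => P i), f i = ∑ i ∈ Finset.univ.filter (fun i => P i), f i := by
    intro f P _ hPp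
    rw [hE, Finset.filter_erase, Finset.erase_eq_of_notMem]
    simp [hPp]
  have hA : jobVal a b Finset.univ j = jobVal a b E j + a p := by
    unfold jobVal
    rw [← hmem a (fun i => i ≤ j) (le_of_lt hpj),
        ← hnmem b (fun i => j ≤ i) (not_le.2 hpj)]
    ring
  have hB : jobVal a b Finset.univ q = jobVal a b E q + b p := by
    unfold jobVal
    rw [← hmem b (fun i => q ≤ i) (le_of_lt hqp),
        ← hnmem a (fun i => i ≤ q) (not_le.2 hqp)]
    ring
  have hC : jobVal a b Finset.univ j + b p = jobVal a b Finset.univ p + a j := by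
    unfold jobVal
    have h1 : Finset.univ.filter (fun i => i ≤ j) =
        insert j (Finset.univ.filter (fun i : Fin n => i ≤ p)) := by
      ext i
      simp only [Finset.mem_insert, Finset.mem_filter, Finset.mem_univ, true_and,
        Fin.le_def, Fin.ext_iff, hjval]
      omega
    have h2 : Finset.univ.filter (fun i : Fin n => p ≤ i) =
        insert p (Finset.univ.filter (fun i => j ≤ i)) := by
      ext i
      simp only [Finset.mem_insert, Finset.mem_filter, Finset.mem_univ, true_and,
        Fin.le_def, Fin.ext_iff, hjval]
      omega
    have hn1 : j ∉ Finset.univ.filter (fun i : Fin n => i ≤ p) := by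
      simp only [Finset.mem_filter, Finset.mem_univ, true_and, Fin.le_def, hjval]
      omega
    have hn2 : p ∉ Finset.univ.filter (fun i : Fin n => j ≤ i) := by
      simp only [Finset.mem_filter, Finset.mem_univ, true_and, Fin.le_def, hjval]
      omega
    rw [h1, h2, Finset.sum_insert hn1, Finset.sum_insert hn2]
    ring
  have hap : a p ≤ a j := hmono (le_of_lt hpj)
  have hqle : jobVal a b Finset.univ q ≤ makespanOf a b Finset.univ :=
    Finset.le_sup (Finset.mem_univ q)
  have hkey : makespanOf a b E ≤ jobVal a b E j := by
    rw [← hqv]; omega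
  have hjq : j ≤ q := hqmax j hjE (le_antisymm (Finset.le_sup hjE) hkey)
  exact absurd hjq (not_le.2 (hqp.trans hpj))
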